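/- Let b ≥ 0 and let a_1, …, a_{b+1} be integers each at least 2, with n = Σ_{i=1}^{b+1} a_i. Then Σ_{i=1}^{b+1} γ_t(P_{a_i}) ≤ γ_t(P_{n−2b}) + 2b, where P_m denotes the path graph on m vertices. -/

import Mathlib

open SimpleGraph

/-- A set `S` of vertices is a total dominating set of `G` if every vertex of `G`
is adjacent to at least one vertex of `S`. -/
def IsTotalDominatingSet {V : Type*} (G : SimpleGraph V) (S : Set V) : Prop :=
  ∀ v : V, ∃ u ∈ S, G.Adj v u

/-- The total domination number of `G`: the minimum cardinality of a total
dominating set of `G`. -/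
noncomputable def totalDominationNumber {V : Type*} (G : SimpleGraph V) : ℕ :=
  sInf {n : ℕ | ∃ S : Set V, S.ncard = n ∧ IsTotalDominatingSet G S}

/-- A graph has no isolated vertices if every vertex has a neighbor. -/
def NoIsolatedVerts {V : Type*} (G : SimpleGraph V) : Prop :=
  ∀ v : V, ∃ u : V, G.Adj v u

/-- The `k`-total bondage number of `G`: the minimum cardinality of a set `F` of
edges of `G` such that `G − F` has no isolated vertices and the total domination
number of `G − F` is at least `γ_t(G) + k`. -/
noncomputable def kTotalBondage {V : Type*} (G : SimpleGraph V) (k : ℕ) : ℕ :=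
  sInf {m : ℕ | ∃ F : Set (Sym2 V), F ⊆ G.edgeSet ∧ F.ncard = m ∧
    NoIsolatedVerts (G.deleteEdges F) ∧
    totalDominationNumber G + k ≤ totalDominationNumber (G.deleteEdges F)}

lemma td_univ (m : ℕ) (hm : 2 ≤ m) :
    IsTotalDominatingSet (pathGraph m) (Set.univ : Set (Fin m)) := by
  intro v
  by_cases h : v.val + 1 < m
  · exact ⟨⟨v.val + 1, h⟩, Set.mem_univ _, pathGraph_adj.mpr (Or.inl rfl)⟩
  · have hv := v.isLt
    refine ⟨⟨v.val - 1, by omega⟩, Set.mem_univ _, pathGraph_adj.mpr (Or.inr ?_)⟩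
    simp only []
    omega

lemma td_exists (m : ℕ) (hm : 2 ≤ m) :
    ∃ S : Set (Fin m), S.ncard = totalDominationNumber (pathGraph m) ∧
      IsTotalDominatingSet (pathGraph m) S := by
  have : totalDominationNumber (pathGraph m) ∈
      {n : ℕ | ∃ S : Set (Fin m), S.ncard = n ∧ IsTotalDominatingSet (pathGraph m) S} :=
    Nat.sInf_mem ⟨_, Set.univ, rfl, td_univ m hm⟩
  obtain ⟨S, h1, h2⟩ := this
  exact ⟨S, h1, h2⟩

lemma td_le {m : ℕ} (S : Set (Fin m)) (h : IsTotalDominatingSet (pathGraph m) S) :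
    totalDominationNumber (pathGraph m) ≤ S.ncard :=
  Nat.sInf_le ⟨S, rfl, h⟩

set_option maxHeartbeats 1000000 in
lemma key (a c : ℕ) (ha : 2 ≤ a) (hc : 2 ≤ c) :
    totalDominationNumber (pathGraph a) + totalDominationNumber (pathGraph c) ≤
      totalDominationNumber (pathGraph (a + c - 2)) + 2 := by
  set N := a + c - 2 with hNdef
  have hN : 2 ≤ N := by omega
  have haN : a ≤ N := by omega
  obtain ⟨S, hScard, hSTD⟩ := td_exists N hN
  set e₁ : Fin a → Fin N := fun v => ⟨v.val, by omega⟩ with he₁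
  set e₂ : Fin c → Fin N := fun v => ⟨v.val + (a - 2), by have := v.isLt; omega⟩ with he₂
  have he₁inj : Function.Injective e₁ := by
    intro x y hxy
    rw [Fin.ext_iff] at hxy ⊢
    exact hxy
  have he₂inj : Function.Injective e₂ := by
    intro x y hxy
    rw [Fin.ext_iff] at hxy ⊢
    simp only [he₂] at hxy
    omega
  have hrange₁ : Set.range e₁ = {u : Fin N | u.val < a} := by
    ext u
    constructor
    · rintro ⟨v, rfl⟩; exact v.isLt
    · intro hu; exact ⟨⟨u.val, hu⟩, Fin.ext rfl⟩
  have hrange₂ : Set.range e₂ = {u : Fin N | a - 2 ≤ u.val} := by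
    ext u
    constructor
    · rintro ⟨v, rfl⟩
      show a - 2 ≤ v.val + (a - 2)
      exact Nat.le_add_left _ _
    · intro hu
      simp only [Set.mem_setOf_eq] at hu
      have := u.isLt
      exact ⟨⟨u.val - (a-2), by omega⟩, Fin.ext (by simp only [he₂]; omega)⟩
  set p : Fin N := ⟨a - 2, by omega⟩ with hp_def
  set q : Fin N := ⟨a - 1, by omega⟩ with hq_def
  set r₁ : Fin a := ⟨a - 2, by omega⟩ with hr₁def
  set r₂ : Fin c := ⟨1, by omega⟩ with hr₂def
  have he₁r₁ : e₁ r₁ = p := Fin.ext rfl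
  have he₂r₂ : e₂ r₂ = q := Fin.ext (by show 1 + (a - 2) = a - 1; omega)
  -- total domination of S₁
  have hS₁TD : IsTotalDominatingSet (pathGraph a) (insert r₁ (e₁ ⁻¹' S)) := by
    intro v
    by_cases hv : v.val = a - 1
    · exact ⟨r₁, Set.mem_insert _ _, pathGraph_adj.mpr (Or.inr (by simp only [hr₁def]; omega))⟩
    · obtain ⟨u, huS, hadj⟩ := hSTD (e₁ v)
      rw [pathGraph_adj] at hadj
      simp only [he₁] at hadj
      have hva := v.isLt
      have hua : u.val < a := by omega
      refine ⟨⟨u.val, hua⟩, Set.mem_insert_of_mem _ ?_, pathGraph_adj.mpr (by simp only []; omega)⟩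
      show e₁ ⟨u.val, hua⟩ ∈ S
      have : e₁ ⟨u.val, hua⟩ = u := Fin.ext rfl
      rwa [this]
  have hS₂TD : IsTotalDominatingSet (pathGraph c) (insert r₂ (e₂ ⁻¹' S)) := by
    intro v
    by_cases hv : v.val = 0
    · exact ⟨r₂, Set.mem_insert _ _, pathGraph_adj.mpr (Or.inl (by simp only [hr₂def]; omega))⟩
    · obtain ⟨u, huS, hadj⟩ := hSTD (e₂ v)
      rw [pathGraph_adj] at hadj
      simp only [he₂] at hadj
      have hvc := v.isLt
      have huN := u.isLt
      have hu2 : a - 2 ≤ u.val := by omega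
      have huc : u.val - (a - 2) < c := by omega
      refine ⟨⟨u.val - (a-2), huc⟩, Set.mem_insert_of_mem _ ?_,
        pathGraph_adj.mpr (by simp only []; omega)⟩
      show e₂ ⟨u.val - (a-2), huc⟩ ∈ S
      have : e₂ ⟨u.val - (a-2), huc⟩ = u := Fin.ext (by simp only [he₂]; omega)
      rwa [this]
  -- cardinalities
  have hpre₁ : (e₁ ⁻¹' S).ncard = (S ∩ {u : Fin N | u.val < a}).ncard := by
    rw [← Set.ncard_image_of_injective _ he₁inj, Set.image_preimage_eq_inter_range, hrange₁]
  have hpre₂ : (e₂ ⁻¹' S).ncard = (S ∩ {u : Fin N | a - 2 ≤ u.val}).ncard := by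
    rw [← Set.ncard_image_of_injective _ he₂inj, Set.image_preimage_eq_inter_range, hrange₂]
  have hXY : (S ∩ {u : Fin N | u.val < a}).ncard + (S ∩ {u : Fin N | a - 2 ≤ u.val}).ncard
      = S.ncard + (S ∩ {p, q}).ncard := by
    have hunion : (S ∩ {u : Fin N | u.val < a}) ∪ (S ∩ {u : Fin N | a - 2 ≤ u.val}) = S := by
      ext u
      simp only [Set.mem_union, Set.mem_inter_iff, Set.mem_setOf_eq]
      have := u.isLt
      constructor
      · rintro (⟨h, _⟩ | ⟨h, _⟩) <;> exact h
      · intro h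
        by_cases hu : u.val < a
        · exact Or.inl ⟨h, hu⟩
        · exact Or.inr ⟨h, by omega⟩
    have hinter : (S ∩ {u : Fin N | u.val < a}) ∩ (S ∩ {u : Fin N | a - 2 ≤ u.val})
        = S ∩ {p, q} := by
      ext u
      simp only [Set.mem_inter_iff, Set.mem_setOf_eq, Set.mem_insert_iff,
        Set.mem_singleton_iff, Fin.ext_iff, hp_def, hq_def]
      constructor
      · rintro ⟨⟨h1, h2⟩, ⟨_, h4⟩⟩
        exact ⟨h1, by omega⟩
      · rintro ⟨h1, (h2 | h2)⟩ <;> exact ⟨⟨h1, by omega⟩, ⟨h1, by omega⟩⟩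
    have := Set.ncard_union_add_ncard_inter (S ∩ {u : Fin N | u.val < a})
      (S ∩ {u : Fin N | a - 2 ≤ u.val}) (Set.toFinite _) (Set.toFinite _)
    rw [hunion, hinter] at this
    omega
  have hpq : p ≠ q := by
    simp only [hp_def, hq_def, ne_eq, Fin.ext_iff]
    omega
  have hbound : (insert r₁ (e₁ ⁻¹' S)).ncard + (insert r₂ (e₂ ⁻¹' S)).ncard ≤ S.ncard + 2 := by
    by_cases hp : p ∈ S <;> by_cases hq : q ∈ S
    · have h1 : insert r₁ (e₁ ⁻¹' S) = e₁ ⁻¹' S :=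
        Set.insert_eq_self.mpr (by rw [Set.mem_preimage, he₁r₁]; exact hp)
      have h2 : insert r₂ (e₂ ⁻¹' S) = e₂ ⁻¹' S :=
        Set.insert_eq_self.mpr (by rw [Set.mem_preimage, he₂r₂]; exact hq)
      have hpqS : S ∩ {p, q} = {p, q} :=
        Set.inter_eq_right.mpr (by rintro u (rfl | rfl) <;> assumption)
      have h5 : (S ∩ ({p, q} : Set (Fin N))).ncard = 2 := by rw [hpqS, Set.ncard_pair hpq]
      rw [h1, h2]
      omega
    · have h1 : insert r₁ (e₁ ⁻¹' S) = e₁ ⁻¹' S :=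
        Set.insert_eq_self.mpr (by rw [Set.mem_preimage, he₁r₁]; exact hp)
      have h2 : (insert r₂ (e₂ ⁻¹' S)).ncard ≤ (e₂ ⁻¹' S).ncard + 1 := Set.ncard_insert_le _ _
      have hpqS : S ∩ {p, q} = {p} := by
        ext u
        simp only [Set.mem_inter_iff, Set.mem_insert_iff, Set.mem_singleton_iff]
        constructor
        · rintro ⟨h1, (rfl | rfl)⟩
          · rfl
          · exact absurd h1 hq
        · rintro rfl
          exact ⟨hp, Or.inl rfl⟩
      have h5 : (S ∩ ({p, q} : Set (Fin N))).ncard = 1 := by rw [hpqS, Set.ncard_singleton]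
      rw [h1]
      omega
    · have h1 : (insert r₁ (e₁ ⁻¹' S)).ncard ≤ (e₁ ⁻¹' S).ncard + 1 := Set.ncard_insert_le _ _
      have h2 : insert r₂ (e₂ ⁻¹' S) = e₂ ⁻¹' S :=
        Set.insert_eq_self.mpr (by rw [Set.mem_preimage, he₂r₂]; exact hq)
      have hpqS : S ∩ {p, q} = {q} := by
        ext u
        simp only [Set.mem_inter_iff, Set.mem_insert_iff, Set.mem_singleton_iff]
        constructor
        · rintro ⟨h1, (rfl | rfl)⟩
          · exact absurd h1 hp
          · rfl
        · rintro rfl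
          exact ⟨hq, Or.inr rfl⟩
      have h5 : (S ∩ ({p, q} : Set (Fin N))).ncard = 1 := by rw [hpqS, Set.ncard_singleton]
      rw [h2]
      omega
    · have h1 : (insert r₁ (e₁ ⁻¹' S)).ncard ≤ (e₁ ⁻¹' S).ncard + 1 := Set.ncard_insert_le _ _
      have h2 : (insert r₂ (e₂ ⁻¹' S)).ncard ≤ (e₂ ⁻¹' S).ncard + 1 := Set.ncard_insert_le _ _
      have hpqS : S ∩ {p, q} = ∅ := by
        ext u
        simp only [Set.mem_inter_iff, Set.mem_insert_iff, Set.mem_singleton_iff,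
          Set.mem_empty_iff_false, iff_false, not_and]
        rintro h1 (rfl | rfl)
        · exact hp h1
        · exact hq h1
      have h5 : (S ∩ ({p, q} : Set (Fin N))).ncard = 0 := by rw [hpqS, Set.ncard_empty]
      omega
  calc totalDominationNumber (pathGraph a) + totalDominationNumber (pathGraph c)
      ≤ (insert r₁ (e₁ ⁻¹' S)).ncard + (insert r₂ (e₂ ⁻¹' S)).ncard :=
        Nat.add_le_add (td_le _ hS₁TD) (td_le _ hS₂TD)
    _ ≤ S.ncard + 2 := hbound
    _ = totalDominationNumber (pathGraph N) + 2 := by rw [hScard]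

/-- If `n = a_1 + ⋯ + a_{b+1}` with each `a_i ≥ 2`, then
`Σ_i γ_t(P_{a_i}) ≤ γ_t(P_{n−2b}) + 2b`. -/
theorem totalDominationNumber_paths_sum_le (b : ℕ) (a : Fin (b + 1) → ℕ)
    (ha : ∀ i, 2 ≤ a i) (n : ℕ) (hn : n = ∑ i, a i) :
    ∑ i, totalDominationNumber (pathGraph (a i)) ≤
      totalDominationNumber (pathGraph (n - 2 * b)) + 2 * b := by
  subst hn
  induction b with
  | zero =>
    rw [Fin.sum_univ_one, Fin.sum_univ_one]
    simp
  | succ b ih =>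
    have step1 : (∑ i : Fin (b + 1), totalDominationNumber (pathGraph (a i.castSucc))) ≤
        totalDominationNumber (pathGraph ((∑ i : Fin (b + 1), a i.castSucc) - 2 * b)) + 2 * b :=
      ih (fun i => a i.castSucc) (fun i => ha _)
    have hm2 : 2 * (b + 1) ≤ ∑ i : Fin (b + 1), a i.castSucc := by
      calc 2 * (b + 1) = ∑ _i : Fin (b + 1), 2 := by
            simp [Finset.sum_const, mul_comm]
        _ ≤ ∑ i : Fin (b + 1), a i.castSucc := Finset.sum_le_sum (fun i _ => ha _)
    have step2 := key ((∑ i : Fin (b + 1), a i.castSucc) - 2 * b) (a (Fin.last (b + 1)))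
      (by omega) (ha _)
    have hsum : (∑ i : Fin (b + 2), a i)
        = (∑ i : Fin (b + 1), a i.castSucc) + a (Fin.last (b + 1)) :=
      Fin.sum_univ_castSucc a
    have harith : (∑ i : Fin (b + 2), a i) - 2 * (b + 1)
        = (∑ i : Fin (b + 1), a i.castSucc) - 2 * b + a (Fin.last (b + 1)) - 2 := by
      have := ha (Fin.last (b + 1))
      omega
    rw [Fin.sum_univ_castSucc (fun i => totalDominationNumber (pathGraph (a i))), harith]
    omega
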